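/- Let 0 < k₁ < k₂ and d > 0, and set q₀ = k₂² − k₁². For ξ > k₂ set Ã = √(ξ² − k₂²) and B̃ = √(ξ² − k₁²), and define 𝔄₀(ξ) = ∫_{-d}^{d} q₀ · e^{B̃(z − d)} · [ cosh(Ã(d + z)) + B̃ · sinh(Ã(d + z)) / Ã ] dz. Then there exists a constant M (depending only on k₁, k₂, d) such that for all ξ > k₂, |𝔄₀(ξ)| ≤ M · e^{2 d B̃} / (1 + ξ). -/

import Mathlib

open intervalIntegral

private lemma sinh_le_mul_exp {x : ℝ} (_hx : 0 ≤ x) : Real.sinh x ≤ x * Real.exp x := by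
  rw [Real.sinh_eq]
  have h1 : -(2*x) + 1 ≤ Real.exp (-(2*x)) := Real.add_one_le_exp _
  have h2 : Real.exp (-(2*x)) = Real.exp (-x) * Real.exp (-x) := by
    rw [← Real.exp_add]; ring_nf
  have h3 : Real.exp x * Real.exp (-x) = 1 := by
    rw [← Real.exp_add]; simp
  have h4 : 0 < Real.exp (-x) := Real.exp_pos _
  nlinarith [Real.exp_pos x]

theorem channel_integral_high_frequency_bound (k₁ k₂ d : ℝ)
    (h1 : 0 < k₁) (h2 : k₁ < k₂) (hd : 0 < d) :
    ∃ M : ℝ, 0 < M ∧ ∀ ξ : ℝ, k₂ < ξ →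
      |∫ z in (-d)..d, (k₂ ^ 2 - k₁ ^ 2) *
          Real.exp (Real.sqrt (ξ ^ 2 - k₁ ^ 2) * (z - d)) *
          (Real.cosh (Real.sqrt (ξ ^ 2 - k₂ ^ 2) * (d + z)) +
            Real.sqrt (ξ ^ 2 - k₁ ^ 2) *
              Real.sinh (Real.sqrt (ξ ^ 2 - k₂ ^ 2) * (d + z)) /
              Real.sqrt (ξ ^ 2 - k₂ ^ 2))| ≤
        M * Real.exp (2 * d * Real.sqrt (ξ ^ 2 - k₁ ^ 2)) / (1 + ξ) := by
  set q₀ : ℝ := k₂ ^ 2 - k₁ ^ 2 with hq₀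
  have hq₀pos : 0 < q₀ := by
    have := sq_lt_sq' (by linarith) h2
    simp only [hq₀]; nlinarith
  refine ⟨q₀ * (2 * d * (1 + max (2 * k₂) 1) + 2), by positivity, ?_⟩
  intro ξ hξ
  have hξpos : 0 < ξ := lt_trans (lt_trans h1 h2) hξ
  set A : ℝ := Real.sqrt (ξ ^ 2 - k₂ ^ 2) with hA
  set B : ℝ := Real.sqrt (ξ ^ 2 - k₁ ^ 2) with hB
  have hA2pos : 0 < ξ ^ 2 - k₂ ^ 2 := by nlinarith
  have hApos : 0 < A := Real.sqrt_pos.mpr hA2pos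
  have hBpos : 0 < B := Real.sqrt_pos.mpr (by nlinarith)
  have hAB : A ≤ B := Real.sqrt_le_sqrt (by nlinarith)
  have hAne : A ≠ 0 := ne_of_gt hApos
  -- exact computation of the integral
  have key : (∫ z in (-d)..d, q₀ * Real.exp (B * (z - d)) *
      (Real.cosh (A * (d + z)) + B * Real.sinh (A * (d + z)) / A))
      = q₀ * Real.sinh (A * (2 * d)) / A := by
    have hderiv : ∀ z ∈ Set.uIcc (-d) d,
        HasDerivAt (fun z => q₀ / A * (Real.exp (B * (z - d)) * Real.sinh (A * (d + z))))
          (q₀ * Real.exp (B * (z - d)) *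
            (Real.cosh (A * (d + z)) + B * Real.sinh (A * (d + z)) / A)) z := by
      intro z _
      have he : HasDerivAt (fun z => Real.exp (B * (z - d)))
          (Real.exp (B * (z - d)) * B) z := by
        have : HasDerivAt (fun z : ℝ => B * (z - d)) B z := by
          simpa using ((hasDerivAt_id z).sub_const d).const_mul B
        simpa using this.exp
      have hs : HasDerivAt (fun z => Real.sinh (A * (d + z)))
          (Real.cosh (A * (d + z)) * A) z := by
        have : HasDerivAt (fun z : ℝ => A * (d + z)) A z := by
          simpa using ((hasDerivAt_id z).const_add d).const_mul A
        simpa using this.sinh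
      have := (he.mul hs).const_mul (q₀ / A)
      refine HasDerivAt.congr_deriv this ?_
      have hA' : A * A⁻¹ = 1 := mul_inv_cancel₀ hAne
      simp only [div_eq_mul_inv]
      linear_combination (q₀ * Real.exp (B * (z - d)) * Real.cosh (A * (d + z))) * hA'
    have hint : IntervalIntegrable (fun z => q₀ * Real.exp (B * (z - d)) *
        (Real.cosh (A * (d + z)) + B * Real.sinh (A * (d + z)) / A))
        MeasureTheory.volume (-d) d := by
      apply Continuous.intervalIntegrable
      fun_prop
    rw [intervalIntegral.integral_eq_sub_of_hasDerivAt hderiv hint]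
    rw [show B * (d - d) = 0 by ring, show A * (d + d) = A * (2 * d) by ring,
      show B * (-d - d) = -(2 * d * B) by ring, show A * (d + -d) = 0 by ring]
    simp [Real.exp_zero, Real.sinh_zero]
    ring
  rw [key]
  have hsh : 0 ≤ Real.sinh (A * (2 * d)) := Real.sinh_nonneg_iff.mpr (by positivity)
  rw [abs_of_nonneg (by positivity)]
  rw [div_le_div_iff₀ hApos (by linarith)]
  -- goal : q₀ * sinh (A * (2*d)) * (1+ξ) ≤ M * exp(2dB) * A
  have hBexp : Real.exp (A * (2 * d)) ≤ Real.exp (2 * d * B) := by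
    apply Real.exp_le_exp.mpr; nlinarith
  rcases le_or_gt ξ (max (2 * k₂) 1) with hcase | hcase
  · -- small ξ : sinh(2Ad) ≤ 2Ad e^{2Ad}
    have hb := sinh_le_mul_exp (x := A * (2 * d)) (by positivity)
    have h1ξ : 1 + ξ ≤ 1 + max (2 * k₂) 1 := by linarith
    have hM : q₀ * (2 * d) * (1 + ξ) ≤ q₀ * (2 * d * (1 + max (2 * k₂) 1) + 2) := by
      nlinarith [mul_le_mul_of_nonneg_left h1ξ (show (0:ℝ) ≤ q₀ * (2 * d) by positivity)]
    have hexp : 0 < Real.exp (2 * d * B) := Real.exp_pos _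
    calc q₀ * Real.sinh (A * (2 * d)) * (1 + ξ)
        ≤ q₀ * (A * (2 * d) * Real.exp (A * (2 * d))) * (1 + ξ) := by
          apply mul_le_mul_of_nonneg_right _ (by linarith)
          exact mul_le_mul_of_nonneg_left hb (le_of_lt hq₀pos)
      _ ≤ q₀ * (A * (2 * d) * Real.exp (2 * d * B)) * (1 + ξ) := by
          apply mul_le_mul_of_nonneg_right _ (by linarith)
          apply mul_le_mul_of_nonneg_left _ (le_of_lt hq₀pos)
          apply mul_le_mul_of_nonneg_left hBexp (by positivity)
      _ = (q₀ * (2 * d) * (1 + ξ)) * Real.exp (2 * d * B) * A := by ring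
      _ ≤ q₀ * (2 * d * (1 + max (2 * k₂) 1) + 2) * Real.exp (2 * d * B) * A := by
          apply mul_le_mul_of_nonneg_right _ (le_of_lt hApos)
          exact mul_le_mul_of_nonneg_right hM (le_of_lt hexp)
  · -- large ξ : sinh ≤ exp/2, A ≥ ξ/2, 1+ξ ≤ 2ξ ≤ 4A
    have hξ1 : 1 ≤ ξ := le_trans (le_max_right _ _) (le_of_lt hcase)
    have hξk : 2 * k₂ ≤ ξ := le_trans (le_max_left _ _) (le_of_lt hcase)
    have hAge : ξ / 2 ≤ A := by
      rw [hA]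
      have : (ξ / 2) ^ 2 ≤ ξ ^ 2 - k₂ ^ 2 := by nlinarith
      calc ξ / 2 = Real.sqrt ((ξ / 2) ^ 2) := by
            rw [Real.sqrt_sq (by positivity)]
        _ ≤ Real.sqrt (ξ ^ 2 - k₂ ^ 2) := Real.sqrt_le_sqrt this
    have hsinh : Real.sinh (A * (2 * d)) ≤ Real.exp (A * (2 * d)) / 2 := by
      rw [Real.sinh_eq]
      have := Real.exp_pos (-(A * (2 * d)))
      linarith
    have h1ξ4A : 1 + ξ ≤ 4 * A := by linarith
    have hexp : 0 < Real.exp (2 * d * B) := Real.exp_pos _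
    have hM2 : 2 * q₀ ≤ q₀ * (2 * d * (1 + max (2 * k₂) 1) + 2) := by
      have : 0 ≤ q₀ * (2 * d * (1 + max (2 * k₂) 1)) := by positivity
      linarith
    calc q₀ * Real.sinh (A * (2 * d)) * (1 + ξ)
        ≤ q₀ * (Real.exp (2 * d * B) / 2) * (1 + ξ) := by
          apply mul_le_mul_of_nonneg_right _ (by linarith)
          apply mul_le_mul_of_nonneg_left _ (le_of_lt hq₀pos)
          calc Real.sinh (A * (2 * d)) ≤ Real.exp (A * (2 * d)) / 2 := hsinh
            _ ≤ Real.exp (2 * d * B) / 2 := by linarith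
      _ ≤ q₀ * (Real.exp (2 * d * B) / 2) * (4 * A) := by
          apply mul_le_mul_of_nonneg_left h1ξ4A (by positivity)
      _ = (2 * q₀) * Real.exp (2 * d * B) * A := by ring
      _ ≤ q₀ * (2 * d * (1 + max (2 * k₂) 1) + 2) * Real.exp (2 * d * B) * A := by
          apply mul_le_mul_of_nonneg_right _ (le_of_lt hApos)
          exact mul_le_mul_of_nonneg_right hM2 (le_of_lt hexp)
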